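/- Let R be an F-finite Noetherian ring of prime characteristic p and M an R-module. For every x ∈ R and every q = pᵉ, one has I_{e+1}(x^{pq-1}, M) ⊆ I_e(x^{q-1}, M). Moreover, if R is reduced, x is a non-zerodivisor and the pair (R, x) is F-pure, then I_e(x^{pᵉ-1}, M) = M for every integer e ≥ 0. -/

import Mathlib

/-!
Statement 14: For an F-finite Noetherian ring `R` of prime characteristic `p`, an
`R`-module `M`, `x ∈ R` and `q = pᵉ`, one has `I_{e+1}(x^{pq-1}, M) ⊆ I_e(x^{q-1}, M)`.
If moreover `R` is reduced, `x` is a non-zerodivisor and the pair `(R, x)` is F-pure,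
then `I_e(x^{pᵉ-1}, M) = M` for every `e ≥ 0`.
-/

universe u v

section Defs

/-- The submodule `I_e(𝔞, M) = Hom_R(ᵉR, M) · 𝔞 ⊆ M`.  An additive map `φ : R →+ M` is an
`R`-linear map `ᵉR → M` precisely when `φ (r ^ p ^ e * y) = r • φ y` for all `r, y ∈ R`. -/
def frobIe (p e : ℕ) (R : Type u) (M : Type v) [CommRing R] [AddCommGroup M]
    [Module R M] (a : Ideal R) : Submodule R M :=
  Submodule.span R
    {m | ∃ φ : R →+ M, (∀ r y : R, φ (r ^ p ^ e * y) = r • φ y) ∧ ∃ y ∈ a, φ y = m}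

/-- `R` is F-finite: `¹R` is a finitely generated `R`-module. -/
def FFinite (p : ℕ) (R : Type u) [CommRing R] : Prop :=
  ∃ (n : ℕ) (g : Fin n → R), ∀ r : R, ∃ c : Fin n → R, r = ∑ i, c i ^ p * g i

/-- The pair `(R, x)` is F-pure: for every `q = pᵉ` the inclusion
`x^{(q-1)/q} R ↪ R^{1/q}` splits; equivalently, for every `e` there is an `R`-linear map
`ᵉR → R` sending `x^{pᵉ - 1}` to `1`. -/
def FPurePair (p : ℕ) (R : Type u) [CommRing R] (x : R) : Prop :=
  ∀ e : ℕ, ∃ φ : R →+ R,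
    (∀ r y : R, φ (r ^ p ^ e * y) = r * φ y) ∧ φ (x ^ (p ^ e - 1)) = 1

end Defs

/-- Let `R` be an F-finite Noetherian ring of prime characteristic `p`
and `M` an `R`-module.  For every `x ∈ R` and every `q = pᵉ` one has
`I_{e+1}(x^{pq-1}, M) ⊆ I_e(x^{q-1}, M)`.  Moreover, if `R` is reduced, `x` is a
non-zerodivisor and the pair `(R, x)` is F-pure, then `I_e(x^{pᵉ-1}, M) = M` for every
integer `e ≥ 0`. -/
theorem stmt14 {R : Type u} [CommRing R] [IsNoetherianRing R]
    (p : ℕ) (hp : p.Prime) [CharP R p] (hFF : FFinite p R)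
    (M : Type v) [AddCommGroup M] [Module R M] (x : R) :
    (∀ e : ℕ,
      frobIe p (e + 1) R M (Ideal.span {x ^ (p * p ^ e - 1)}) ≤
        frobIe p e R M (Ideal.span {x ^ (p ^ e - 1)})) ∧
    (IsReduced R → x ∈ nonZeroDivisors R → FPurePair p R x →
      ∀ e : ℕ, frobIe p e R M (Ideal.span {x ^ (p ^ e - 1)}) = ⊤) := by

  haveI := Fact.mk hp
  have hexp : ∀ e : ℕ, (p ^ e - 1) * p + (p - 1) = p * p ^ e - 1 := by
    intro e
    have h1 : 1 ≤ p ^ e := Nat.one_le_pow _ _ hp.pos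
    have h2 : 2 ≤ p := hp.two_le
    obtain ⟨k, hk⟩ := Nat.exists_eq_add_of_le h1
    rw [hk]
    have : (1 + k - 1) * p = k * p := by congr 1; omega
    rw [this, Nat.mul_add, Nat.mul_one]
    have := Nat.mul_comm p k
    omega
  constructor
  · intro e
    rw [frobIe, frobIe, Submodule.span_le]
    rintro m ⟨φ, hφ, y, hy, rfl⟩
    rw [Ideal.mem_span_singleton'] at hy
    obtain ⟨c, rfl⟩ := hy
    obtain ⟨n, g, hg⟩ := hFF
    obtain ⟨d, hd⟩ := hg c
    have key : φ (c * x ^ (p * p ^ e - 1)) =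
        ∑ i, φ ((d i * x ^ (p ^ e - 1)) ^ p * (g i * x ^ (p - 1))) := by
      rw [hd, Finset.sum_mul, map_sum]
      refine Finset.sum_congr rfl fun i _ => ?_
      congr 1
      calc d i ^ p * g i * x ^ (p * p ^ e - 1)
          = d i ^ p * g i * x ^ ((p ^ e - 1) * p + (p - 1)) := by rw [hexp e]
        _ = d i ^ p * g i * (x ^ ((p ^ e - 1) * p) * x ^ (p - 1)) := by rw [pow_add]
        _ = (d i * x ^ (p ^ e - 1)) ^ p * (g i * x ^ (p - 1)) := by
            rw [mul_pow, ← pow_mul]; ring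
    rw [key]
    refine Submodule.sum_mem _ fun i _ => ?_
    apply Submodule.subset_span
    refine ⟨{ toFun := fun z => φ (z ^ p * (g i * x ^ (p - 1)))
              map_zero' := by simp [zero_pow hp.ne_zero]
              map_add' := fun a b => by
                rw [add_pow_char, add_mul, map_add] }, ?_, ?_⟩
    · intro r z
      simp only [AddMonoidHom.coe_mk, ZeroHom.coe_mk]
      have h1 : (r ^ p ^ e * z) ^ p * (g i * x ^ (p - 1)) =
          r ^ p ^ (e + 1) * (z ^ p * (g i * x ^ (p - 1))) := by
        rw [pow_succ, pow_mul, mul_pow]; ring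
      rw [h1, hφ]
    · exact ⟨d i * x ^ (p ^ e - 1),
        Ideal.mem_span_singleton'.2 ⟨d i, rfl⟩, rfl⟩
  · intro _ _ hFP e
    rw [frobIe, eq_top_iff]
    intro m _
    obtain ⟨φ, hφ, hφx⟩ := hFP e
    apply Submodule.subset_span
    refine ⟨{ toFun := fun z => φ z • m
              map_zero' := by simp
              map_add' := fun a b => by rw [map_add, add_smul] }, ?_, ?_⟩
    · intro r z
      simp only [AddMonoidHom.coe_mk, ZeroHom.coe_mk]
      rw [hφ, mul_smul]
    · exact ⟨x ^ (p ^ e - 1), Ideal.mem_span_singleton_self _, by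
        simp [hφx]⟩
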